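/- For every assignment p*_1, …, p*_k ∈ P, one has Σ_{i=1}^k dist(p̂_i, p*_i) + Σ_{{i,j}∈E} dist(p*_i, p*_j) ≤ 2 · (Σ_{i=1}^k dist(q_i, p*_i) + Σ_{{i,j}∈E} dist(p*_i, p*_j)). That is, replacing each query q_i by its nearest label p̂_i in the nearest-neighbor term of the SNN cost at most doubles the cost. -/

import Mathlib

open Finset

/-- The symmetric pairwise-distance function induced on unordered pairs by an
assignment `p : V → X`. -/
noncomputable def pairDist {V X : Type*} [MetricSpace X] (p : V → X) : Sym2 V → ℝ :=
  Sym2.lift ⟨fun i j => dist (p i) (p j), fun i j => dist_comm (p i) (p j)⟩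

/-- replacing each query `q_i` by its nearest label `p̂_i` in the nearest-neighbor
term of the SNN cost at most doubles the cost of any assignment `p*` with values in `P`. -/
theorem nn_replacement_doubles_cost
    {X : Type*} [MetricSpace X] {k : ℕ} (hk : 1 ≤ k)
    (P : Finset X) (hPne : P.Nonempty)
    (q : Fin k → X) (G : SimpleGraph (Fin k)) [Fintype G.edgeSet]
    (phat : Fin k → X) (hphatP : ∀ i, phat i ∈ P)
    (hphatNN : ∀ i, ∀ pt ∈ P, dist (q i) (phat i) ≤ dist (q i) pt)
    (ps : Fin k → X) (hpsP : ∀ i, ps i ∈ P) :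
    ∑ i, dist (phat i) (ps i) + ∑ e ∈ G.edgeFinset, pairDist ps e ≤
      2 * (∑ i, dist (q i) (ps i) + ∑ e ∈ G.edgeFinset, pairDist ps e) := by
  have h1 : ∑ i, dist (phat i) (ps i) ≤ 2 * ∑ i, dist (q i) (ps i) := by
    rw [Finset.mul_sum]
    apply Finset.sum_le_sum
    intro i _
    calc dist (phat i) (ps i) ≤ dist (phat i) (q i) + dist (q i) (ps i) := dist_triangle _ _ _
      _ ≤ dist (q i) (ps i) + dist (q i) (ps i) := by
          rw [dist_comm (phat i) (q i)]
          exact add_le_add_left (hphatNN i (ps i) (hpsP i)) _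
      _ = 2 * dist (q i) (ps i) := by ring
  have h2 : (0:ℝ) ≤ ∑ e ∈ G.edgeFinset, pairDist ps e := by
    apply Finset.sum_nonneg
    intro e _
    induction e using Sym2.ind with
    | _ i j => exact dist_nonneg
  linarith
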